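/- Along any solution of the dynamical system da/dt = Bc, dB/dt = a c^T, dc/dt = B^T a (with a, c ∈ ℝ^m and B an m×m real matrix), for each index k the quantity a_k² − Σ_{k'} B_{kk'}² is constant in time. -/

import Mathlib

/-- Along any solution of the system `a' = B c`, `B' = a cᵀ`, `c' = Bᵀ a`,
for each index `k` the quantity `a_k² − Σ_{k'} B_{k k'}²` is constant in time. -/
theorem stmt_0 (m : ℕ) (a c : ℝ → Fin m → ℝ) (B : ℝ → Fin m → Fin m → ℝ)
    (ha : ∀ t i, HasDerivAt (fun s => a s i) (∑ j, B t i j * c t j) t)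
    (hB : ∀ t i j, HasDerivAt (fun s => B s i j) (a t i * c t j) t)
    (hc : ∀ t j, HasDerivAt (fun s => c s j) (∑ i, B t i j * a t i) t) :
    ∀ (k : Fin m) (t s : ℝ),
      a t k ^ 2 - ∑ k', B t k k' ^ 2 = a s k ^ 2 - ∑ k', B s k k' ^ 2 := by
  intro k t s
  have key : ∀ u : ℝ, HasDerivAt (fun r => a r k ^ 2 - ∑ k', B r k k' ^ 2) 0 u := by
    intro u
    have h1 : HasDerivAt (fun r => a r k ^ 2)
        (2 * a u k * (∑ j, B u k j * c u j)) u := by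
      simpa [mul_comm] using ((ha u k).fun_pow 2)
    have h2 : HasDerivAt (fun r => ∑ k', B r k k' ^ 2)
        (∑ j, 2 * B u k j * (a u k * c u j)) u := by
      apply HasDerivAt.fun_sum
      intro j _
      simpa [mul_comm] using ((hB u k j).fun_pow 2)
    have h := h1.fun_sub h2
    convert h using 1
    · rfl
    · rfl
    rw [Finset.mul_sum, ← Finset.sum_sub_distrib]
    symm
    apply Finset.sum_eq_zero
    intro j _
    ring
  have hconst := is_const_of_deriv_eq_zero
    (f := fun r => a r k ^ 2 - ∑ k', B r k k' ^ 2)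
    (fun u => (key u).differentiableAt) (fun u => (key u).deriv) t s
  exact hconst
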